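/- Let p and q be distinct sentential variables. Then O(p∧q) ∧ O(p∧¬q) ⊨_Δ Op. -/

import Mathlib

/-- Formulas of the preference language L, generated from sentential
variables by negation, conjunction, and the binary connective ⪰. -/
inductive Fml (α : Type) : Type where
  | var : α → Fml α
  | neg : Fml α → Fml α
  | conj : Fml α → Fml α → Fml α
  | succeq : Fml α → Fml α → Fml α

namespace Fml

variable {α : Type}

/-- φ∨ψ := ¬(¬φ∧¬ψ) -/
def disj (φ ψ : Fml α) : Fml α := neg (conj (neg φ) (neg ψ))
/-- φ→ψ := ¬φ∨ψ -/
def impl (φ ψ : Fml α) : Fml α := disj (neg φ) ψ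
/-- φ↔ψ := (φ→ψ)∧(ψ→φ) -/
def iffF (φ ψ : Fml α) : Fml α := conj (impl φ ψ) (impl ψ φ)
/-- φ≻ψ := (φ⪰ψ)∧¬(ψ⪰φ) -/
def succ (φ ψ : Fml α) : Fml α := conj (succeq φ ψ) (neg (succeq ψ φ))
/-- ⊤ := p→p for a fixed variable p -/
def topF (p : α) : Fml α := impl (var p) (var p)
/-- ⊥ := ¬⊤ -/
def botF (p : α) : Fml α := neg (topF p)
/-- ◻φ := ¬(¬φ⪰¬φ) -/
def box (φ : Fml α) : Fml α := neg (succeq (neg φ) (neg φ))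
/-- ◇φ := φ⪰φ -/
def dia (φ : Fml α) : Fml α := succeq φ φ
/-- Conditional obligation C(φ,ψ) := (φ∧ψ) ≻ (φ∧¬ψ) -/
def Cond (φ ψ : Fml α) : Fml α := succ (conj φ ψ) (conj φ (neg ψ))
/-- Obligation Oψ := C(⊤,ψ), where ⊤ uses the fixed variable p -/
def Ob (p : α) (ψ : Fml α) : Fml α := Cond (topF p) ψ
/-- Permission Pψ := ¬O¬ψ -/
def Perm (p : α) (ψ : Fml α) : Fml α := neg (Ob p (neg ψ))

end Fml

/-- A model (W,S,U,T): a nonempty set of worlds, a selection function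
picking a member of each nonempty set of worlds, a real-valued utility
function, and a truth-assignment. -/
structure Model (α : Type) : Type 1 where
  W : Type
  nonempty : Nonempty W
  S : W → Set W → W
  S_mem : ∀ (w : W) (A : Set W), A.Nonempty → S w A ∈ A
  U : W → ℝ
  T : α → Set W

open Classical in
/-- The proposition ⟦φ⟧_M expressed by φ in the model M. -/
noncomputable def sat {α : Type} (M : Model α) : Fml α → Set M.W
  | .var p => M.T p
  | .neg θ => (sat M θ)ᶜ
  | .conj θ ψ => sat M θ ∩ sat M ψ
  | .succeq θ ψ =>
      if sat M θ = ∅ ∨ sat M ψ = ∅ then ∅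
      else {w | M.U (M.S w (sat M θ)) ≥ M.U (M.S w (sat M ψ))}

/-- φ ⊨ ψ : in every model, ⟦φ⟧ ⊆ ⟦ψ⟧. -/
def Implies {α : Type} (φ ψ : Fml α) : Prop :=
  ∀ M : Model α, sat M φ ⊆ sat M ψ

/-- ⊨ φ : in every model, ⟦φ⟧ = W. -/
def Valid {α : Type} (φ : Fml α) : Prop :=
  ∀ M : Model α, sat M φ = Set.univ

/-- S is a selection function on W = 𝒫(Props): for each world w and
nonempty set A of worlds, S w A ∈ A. -/
def IsSelection {α : Type} (S : Set α → Set (Set α) → Set α) : Prop :=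
  ∀ (w : Set α) (A : Set (Set α)), A.Nonempty → S w A ∈ A

/-- S is Δ-based: no w₁ ∈ A has w Δ w₁ properly included in w Δ S(w,A). -/
def DeltaBased {α : Type} (S : Set α → Set (Set α) → Set α) : Prop :=
  ∀ (w : Set α) (A : Set (Set α)), A.Nonempty →
    ¬ ∃ w1 ∈ A, symmDiff w w1 ⊂ symmDiff w (S w A)

/-- A Δ model: W = 𝒫(Props), T(p) = {w | p ∈ w}, and a Δ-based
selection function. -/
structure DeltaModel (α : Type) : Type where
  S : Set α → Set (Set α) → Set α
  S_mem : ∀ (w : Set α) (A : Set (Set α)), A.Nonempty → S w A ∈ A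
  delta : DeltaBased S
  U : Set α → ℝ

/-- The underlying model of a Δ model. -/
def DeltaModel.toModel {α : Type} (M : DeltaModel α) : Model α where
  W := Set α
  nonempty := ⟨∅⟩
  S := M.S
  S_mem := M.S_mem
  U := M.U
  T := fun p => {w : Set α | p ∈ w}

/-- φ ⊨_Δ ψ : in every Δ model, ⟦φ⟧ ⊆ ⟦ψ⟧. -/
def DeltaImplies {α : Type} (φ ψ : Fml α) : Prop :=
  ∀ M : DeltaModel α, sat M.toModel φ ⊆ sat M.toModel ψ

/-- The g-distance between two worlds: the (possibly infinite) sum of the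
weights of the variables in their symmetric difference. -/
noncomputable def gdist {α : Type} (g : α → ℝ) (w0 w1 : Set α) : ENNReal :=
  ∑' v : ↥(symmDiff w0 w1), ENNReal.ofReal (g v)

/-- S is g-based: no w' ∈ A is strictly g-closer to w than S(w,A). -/
def GBased {α : Type} (g : α → ℝ) (S : Set α → Set (Set α) → Set α) : Prop :=
  ∀ (w : Set α) (A : Set (Set α)), A.Nonempty →
    ¬ ∃ w' ∈ A, gdist g w w' < gdist g w (S w A)
open Fml

lemma sat_topF {α : Type} (M : Model α) (p0 : α) : sat M (topF p0) = Set.univ := by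
  simp [sat, topF, Fml.impl, Fml.disj]

lemma sel_min {α : Type} (M : DeltaModel α) (w : Set α) (A : Set (Set α))
    (m : Set α) (hm : m ∈ A)
    (hmin : ∀ z ∈ A, symmDiff w m ⊆ symmDiff w z) :
    M.S w A = m := by
  have hA : A.Nonempty := ⟨m, hm⟩
  by_contra hne
  exact M.delta w A hA ⟨m, hm, lt_of_le_of_ne (hmin _ (M.S_mem w A hA))
    (fun h => hne ((symmDiff_right_injective w h).symm))⟩

lemma sel_pair {α : Type} (M : DeltaModel α) (w : Set α) (A : Set (Set α))
    (m1 m2 : Set α) (h1 : m1 ∈ A) (h2 : m2 ∈ A)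
    (hmin : ∀ z ∈ A, symmDiff w m1 ⊆ symmDiff w z ∨ symmDiff w m2 ⊆ symmDiff w z) :
    M.S w A = m1 ∨ M.S w A = m2 := by
  have hA : A.Nonempty := ⟨m1, h1⟩
  by_contra hne
  push_neg at hne
  rcases hmin _ (M.S_mem w A hA) with h | h
  · exact M.delta w A hA ⟨m1, h1, lt_of_le_of_ne h
      (fun h' => hne.1 ((symmDiff_right_injective w h').symm))⟩
  · exact M.delta w A hA ⟨m2, h2, lt_of_le_of_ne h
      (fun h' => hne.2 ((symmDiff_right_injective w h').symm))⟩

lemma sel_self {α : Type} (M : DeltaModel α) (w : Set α) (A : Set (Set α))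
    (hw : w ∈ A) : M.S w A = w :=
  sel_min M w A w hw (by intro z _; simp)

open Classical in
lemma mem_Ob {α : Type} (M : Model α) (p0 : α) (ψ : Fml α) (w : M.W) :
    w ∈ sat M (Ob p0 ψ) ↔
      sat M ψ ≠ ∅ ∧ (sat M ψ)ᶜ ≠ ∅ ∧
        M.U (M.S w (sat M ψ)) > M.U (M.S w ((sat M ψ)ᶜ)) := by
  have h1 : sat M (conj (topF p0) ψ) = sat M ψ := by
    simp [sat, sat_topF]
  have h2 : sat M (conj (topF p0) (neg ψ)) = (sat M ψ)ᶜ := by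
    simp [sat, sat_topF]
  have e1 : sat M (Ob p0 ψ) =
      sat M (succeq (conj (topF p0) ψ) (conj (topF p0) (neg ψ))) ∩
      (sat M (succeq (conj (topF p0) (neg ψ)) (conj (topF p0) ψ)))ᶜ := rfl
  have e2 : sat M (succeq (conj (topF p0) ψ) (conj (topF p0) (neg ψ))) =
      if sat M (conj (topF p0) ψ) = ∅ ∨ sat M (conj (topF p0) (neg ψ)) = ∅ then ∅
      else {v | M.U (M.S v (sat M (conj (topF p0) ψ))) ≥
        M.U (M.S v (sat M (conj (topF p0) (neg ψ))))} := rfl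
  have e3 : sat M (succeq (conj (topF p0) (neg ψ)) (conj (topF p0) ψ)) =
      if sat M (conj (topF p0) (neg ψ)) = ∅ ∨ sat M (conj (topF p0) ψ) = ∅ then ∅
      else {v | M.U (M.S v (sat M (conj (topF p0) (neg ψ)))) ≥
        M.U (M.S v (sat M (conj (topF p0) ψ)))} := rfl
  rw [e1, e2, e3]
  simp only [h1, h2]
  by_cases he1 : sat M ψ = ∅
  · simp [he1]
  by_cases he2 : (sat M ψ)ᶜ = ∅
  · simp [he1, he2]
  simp only [he1, he2, or_self, if_false, Set.mem_inter_iff, Set.mem_compl_iff,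
    Set.mem_setOf_eq, ne_eq, not_false_iff, true_and, ge_iff_le, not_le, gt_iff_lt]
  constructor
  · rintro ⟨-, h'⟩; exact h'
  · intro h; exact ⟨le_of_lt h, h⟩

open Fml in
theorem stmt_16 {α : Type} (p q : α) (hpq : p ≠ q) (p0 : α) :
    DeltaImplies
      (conj (Ob p0 (conj (var p) (var q))) (Ob p0 (conj (var p) (neg (var q)))))
      (Ob p0 (var p)) := by
  intro M
  rw [Set.subset_def]
  refine fun (w : Set α) hw => ?_
  have hP : sat M.toModel (var p) = {z : Set α | p ∈ z} := rfl
  have hPQ : sat M.toModel (conj (var p) (var q)) =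
      {z : Set α | p ∈ z} ∩ {z : Set α | q ∈ z} := rfl
  have hPnQ : sat M.toModel (conj (var p) (neg (var q))) =
      {z : Set α | p ∈ z} ∩ {z : Set α | q ∈ z}ᶜ := rfl
  rw [show sat M.toModel (conj (Ob p0 (conj (var p) (var q)))
        (Ob p0 (conj (var p) (neg (var q))))) =
      sat M.toModel (Ob p0 (conj (var p) (var q))) ∩
      sat M.toModel (Ob p0 (conj (var p) (neg (var q)))) from rfl] at hw
  obtain ⟨hw1, hw2⟩ := hw
  replace hw1 := (mem_Ob M.toModel p0 _ w).mp hw1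
  rw [hPQ] at hw1
  replace hw2 := (mem_Ob M.toModel p0 _ w).mp hw2
  rw [hPnQ] at hw2
  refine (mem_Ob M.toModel p0 _ w).mpr ?_
  rw [hP]
  obtain ⟨hne1, -, hu1⟩ := hw1
  obtain ⟨hne2, -, hu2⟩ := hw2
  rw [show M.toModel.S = M.S from rfl, show M.toModel.U = M.U from rfl] at hu1 hu2 ⊢
  obtain ⟨z0, hz0⟩ := Set.nonempty_iff_ne_empty.mpr hne1
  refine ⟨Set.nonempty_iff_ne_empty.mp ⟨z0, hz0.1⟩,
    Set.nonempty_iff_ne_empty.mp ⟨(∅ : Set α), by intro h; exact h⟩, ?_⟩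
  -- compute selections
  have hSP : M.S w {z : Set α | p ∈ z} = insert p w := by
    refine sel_min M w _ _ (by simp) ?_
    intro z hz v hv
    simp only [Set.mem_setOf_eq] at hz
    rw [Set.mem_symmDiff] at hv ⊢
    simp only [Set.mem_insert_iff] at hv
    by_cases hvp : v = p
    · subst hvp; tauto
    · tauto
  have hSnP : M.S w ({z : Set α | p ∈ z}ᶜ) = w \ {p} := by
    refine sel_min M w _ _ (by simp) ?_
    intro z hz v hv
    simp only [Set.mem_compl_iff, Set.mem_setOf_eq] at hz
    rw [Set.mem_symmDiff] at hv ⊢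
    simp only [Set.mem_diff, Set.mem_singleton_iff] at hv
    by_cases hvp : v = p
    · subst hvp; tauto
    · tauto
  have hSPQ : M.S w ({z : Set α | p ∈ z} ∩ {z : Set α | q ∈ z}) =
      insert p (insert q w) := by
    refine sel_min M w _ _ (by simp) ?_
    intro z hz v hv
    obtain ⟨hzp, hzq⟩ := hz
    simp only [Set.mem_setOf_eq] at hzp hzq
    rw [Set.mem_symmDiff] at hv ⊢
    simp only [Set.mem_insert_iff] at hv
    by_cases hvp : v = p
    · subst hvp; tauto
    · by_cases hvq : v = q
      · subst hvq; tauto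
      · tauto
  have hSPnQ : M.S w ({z : Set α | p ∈ z} ∩ {z : Set α | q ∈ z}ᶜ) =
      insert p (w \ {q}) := by
    refine sel_min M w _ _ ⟨by simp, by simp [hpq, Ne.symm hpq]⟩ ?_
    intro z hz v hv
    obtain ⟨hzp, hzq⟩ := hz
    simp only [Set.mem_setOf_eq, Set.mem_compl_iff] at hzp hzq
    rw [Set.mem_symmDiff] at hv ⊢
    simp only [Set.mem_insert_iff, Set.mem_diff, Set.mem_singleton_iff] at hv
    by_cases hvp : v = p
    · subst hvp; tauto
    · by_cases hvq : v = q
      · subst hvq; tauto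
      · tauto
  change M.U (M.S w {z : Set α | p ∈ z}) > M.U (M.S w ({z : Set α | p ∈ z}ᶜ))
  change M.U (M.S w ({z : Set α | p ∈ z} ∩ {z : Set α | q ∈ z})) >
    M.U (M.S w (({z : Set α | p ∈ z} ∩ {z : Set α | q ∈ z})ᶜ)) at hu1
  change M.U (M.S w ({z : Set α | p ∈ z} ∩ {z : Set α | q ∈ z}ᶜ)) >
    M.U (M.S w (({z : Set α | p ∈ z} ∩ {z : Set α | q ∈ z}ᶜ)ᶜ)) at hu2
  rw [hSP, hSnP]
  rw [hSPQ] at hu1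
  rw [hSPnQ] at hu2
  by_cases hp : p ∈ w
  · have eP : insert p w = w := Set.insert_eq_self.mpr hp
    rw [eP]
    by_cases hq : q ∈ w
    · -- p,q ∈ w
      have e1 : insert p (insert q w) = w := by
        rw [Set.insert_eq_self.mpr hq, eP]
      have e2 : insert p (w \ {q}) = w \ {q} := by
        rw [Set.insert_eq_self]; exact ⟨hp, hpq⟩
      rw [e1] at hu1
      rw [e2] at hu2
      have hBpn : M.S w (({z : Set α | p ∈ z} ∩ {z : Set α | q ∈ z}ᶜ)ᶜ) = w := by
        apply sel_self
        simp [hq]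
      rw [hBpn] at hu2
      have hBpq : M.S w (({z : Set α | p ∈ z} ∩ {z : Set α | q ∈ z})ᶜ) = w \ {p} ∨
          M.S w (({z : Set α | p ∈ z} ∩ {z : Set α | q ∈ z})ᶜ) = w \ {q} := by
        refine sel_pair M w _ _ _ (by simp) (by simp) ?_
        intro z hz
        simp only [Set.mem_compl_iff, Set.mem_inter_iff, Set.mem_setOf_eq, not_and] at hz
        by_cases hzp : p ∈ z
        · right
          intro v hv
          rw [Set.mem_symmDiff] at hv ⊢
          simp only [Set.mem_diff, Set.mem_singleton_iff] at hv
          by_cases hvq : v = q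
          · subst hvq; tauto
          · tauto
        · left
          intro v hv
          rw [Set.mem_symmDiff] at hv ⊢
          simp only [Set.mem_diff, Set.mem_singleton_iff] at hv
          by_cases hvp : v = p
          · subst hvp; tauto
          · tauto
      rcases hBpq with h | h
      · rw [h] at hu1; exact hu1
      · rw [h] at hu1; linarith
    · -- p ∈ w, q ∉ w
      have e1 : insert p (insert q w) = insert q w := by
        rw [Set.insert_comm, Set.insert_eq_self.mpr hp]
      have e2 : insert p (w \ {q}) = w := by
        rw [Set.diff_singleton_eq_self hq, eP]
      rw [e1] at hu1
      rw [e2] at hu2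
      have hBpq : M.S w (({z : Set α | p ∈ z} ∩ {z : Set α | q ∈ z})ᶜ) = w := by
        apply sel_self
        simp [hq]
      rw [hBpq] at hu1
      have hBpn : M.S w (({z : Set α | p ∈ z} ∩ {z : Set α | q ∈ z}ᶜ)ᶜ) = w \ {p} ∨
          M.S w (({z : Set α | p ∈ z} ∩ {z : Set α | q ∈ z}ᶜ)ᶜ) = insert q w := by
        refine sel_pair M w _ _ _ (by simp) (by simp) ?_
        intro z hz
        simp only [Set.mem_compl_iff, Set.mem_inter_iff, Set.mem_setOf_eq, not_and,
          not_not] at hz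
        by_cases hzp : p ∈ z
        · right
          intro v hv
          rw [Set.mem_symmDiff] at hv ⊢
          simp only [Set.mem_insert_iff] at hv
          by_cases hvq : v = q
          · subst hvq; tauto
          · tauto
        · left
          intro v hv
          rw [Set.mem_symmDiff] at hv ⊢
          simp only [Set.mem_diff, Set.mem_singleton_iff] at hv
          by_cases hvp : v = p
          · subst hvp; tauto
          · tauto
      rcases hBpn with h | h
      · rw [h] at hu2; exact hu2
      · rw [h] at hu2; linarith
  · -- p ∉ w
    have eY : w \ {p} = w := Set.diff_singleton_eq_self hp
    rw [eY]
    by_cases hq : q ∈ w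
    · have e1 : insert p (insert q w) = insert p w := by
        rw [Set.insert_eq_self.mpr hq]
      rw [e1] at hu1
      have hBpq : M.S w (({z : Set α | p ∈ z} ∩ {z : Set α | q ∈ z})ᶜ) = w := by
        apply sel_self
        simp [hp]
      rw [hBpq] at hu1
      exact hu1
    · have e2 : insert p (w \ {q}) = insert p w := by
        rw [Set.diff_singleton_eq_self hq]
      rw [e2] at hu2
      have hBpn : M.S w (({z : Set α | p ∈ z} ∩ {z : Set α | q ∈ z}ᶜ)ᶜ) = w := by
        apply sel_self
        simp [hp]
      rw [hBpn] at hu2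
      exact hu2
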